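/- Let x = ξ Σ^{1/2} u with ξ ≥ 0, E(ξ²) = p, E(ξ⁴) < ∞, u uniform on the unit sphere of ℝ^p independent of ξ, and Σ positive semidefinite. Then Var(‖x‖²) = [E(ξ⁴)/(p(p+2)) − 1]·tr(Σ)² + 2·[E(ξ⁴)/(p(p+2))]·tr(Σ²). -/

import Mathlib

open MeasureTheory ProbabilityTheory Matrix

/-- A probability measure on vectors is the uniform distribution on the unit sphere:
it is a probability measure, concentrated on the unit sphere, and invariant under
every orthogonal transformation. -/
def IsUniformOnSphere {p : ℕ} (μ : MeasureTheory.Measure (Fin p → ℝ)) : Prop :=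
  MeasureTheory.IsProbabilityMeasure μ ∧
  (∀ᵐ x ∂μ, dotProduct x x = 1) ∧
  ∀ Q : Matrix (Fin p) (Fin p) ℝ, Q ∈ Matrix.orthogonalGroup (Fin p) ℝ →
    μ.map (fun x => Q.mulVec x) = μ

/-- The positive semidefinite square root of a positive semidefinite matrix
(as defined in the older Mathlib, where it was `Matrix.PosSemidef.sqrt`). -/
noncomputable def Matrix.PosSemidef.sqrt {n 𝕜 : Type*} [Fintype n] [DecidableEq n] [RCLike 𝕜] [PartialOrder 𝕜]
    {A : Matrix n n 𝕜} (hA : A.PosSemidef) : Matrix n n 𝕜 :=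
  hA.1.eigenvectorUnitary.1 * diagonal ((↑) ∘ (√·) ∘ hA.1.eigenvalues) *
    (star hA.1.eigenvectorUnitary : Matrix n n 𝕜)

namespace SqrtAux

lemma sqrt_conjTranspose {p : ℕ} {S : Matrix (Fin p) (Fin p) ℝ} (hS : S.PosSemidef) :
    (hS.sqrt)ᴴ = hS.sqrt := by
  simp [Matrix.PosSemidef.sqrt, Matrix.conjTranspose_mul, Matrix.diagonal_conjTranspose, mul_assoc,
    Matrix.star_eq_conjTranspose, Matrix.conjTranspose_eq_transpose_of_trivial]

lemma sqrt_mul_self {p : ℕ} {S : Matrix (Fin p) (Fin p) ℝ} (hS : S.PosSemidef) :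
    hS.sqrt * hS.sqrt = S := by
  have hU : (star hS.1.eigenvectorUnitary : Matrix (Fin p) (Fin p) ℝ) *
      hS.1.eigenvectorUnitary.1 = 1 :=
    Unitary.star_mul_self_of_mem hS.1.eigenvectorUnitary.2
  have hD : diagonal ((RCLike.ofReal : ℝ → ℝ) ∘ (√·) ∘ hS.1.eigenvalues) * diagonal ((RCLike.ofReal : ℝ → ℝ) ∘ (√·) ∘ hS.1.eigenvalues)
      = diagonal (RCLike.ofReal ∘ hS.1.eigenvalues : Fin p → ℝ) := by
    rw [Matrix.diagonal_mul_diagonal]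
    congr 1
    funext i
    simp [Real.mul_self_sqrt (hS.eigenvalues_nonneg i)]
  conv_rhs => rw [hS.1.spectral_theorem]
  simp only [Matrix.PosSemidef.sqrt, Unitary.conjStarAlgAut_apply]
  calc _ = hS.1.eigenvectorUnitary.1 * diagonal ((RCLike.ofReal : ℝ → ℝ) ∘ (√·) ∘ hS.1.eigenvalues) *
        ((star hS.1.eigenvectorUnitary : Matrix (Fin p) (Fin p) ℝ) * hS.1.eigenvectorUnitary.1) *
        diagonal ((RCLike.ofReal : ℝ → ℝ) ∘ (√·) ∘ hS.1.eigenvalues) *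
        (star hS.1.eigenvectorUnitary : Matrix (Fin p) (Fin p) ℝ) := by simp only [mul_assoc]
    _ = _ := by rw [hU, mul_one, mul_assoc _ (diagonal _) (diagonal _), hD]

end SqrtAux

open Finset

namespace SphereAux

variable {p : ℕ} {μ : Measure (Fin p → ℝ)}

lemma measQ (Q : Matrix (Fin p) (Fin p) ℝ) : Measurable fun x : Fin p → ℝ => Q.mulVec x :=
  measurable_pi_lambda _ fun i => by
    simp only [Matrix.mulVec, dotProduct]
    exact Finset.measurable_sum Finset.univ fun j _ => (by fun_prop)

lemma integral_comp_orth
    (hinv : ∀ Q : Matrix (Fin p) (Fin p) ℝ, Q ∈ Matrix.orthogonalGroup (Fin p) ℝ →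
      μ.map (fun x => Q.mulVec x) = μ)
    {Q : Matrix (Fin p) (Fin p) ℝ} (hQ : Q ∈ Matrix.orthogonalGroup (Fin p) ℝ)
    {f : (Fin p → ℝ) → ℝ} (hf : Measurable f) :
    ∫ x, f (Q.mulVec x) ∂μ = ∫ x, f x ∂μ := by
  conv_rhs => rw [← hinv Q hQ]
  rw [integral_map (measQ Q).aemeasurable hf.aestronglyMeasurable]

lemma ae_abs_le (hsph : ∀ᵐ x ∂μ, dotProduct x x = 1) :
    ∀ᵐ v ∂μ, ∀ i, |v i| ≤ 1 := by
  filter_upwards [hsph] with v hv i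
  have h1 : v i * v i ≤ 1 := by
    rw [← hv]
    simpa [dotProduct] using
      Finset.single_le_sum (f := fun j => v j * v j) (fun j _ => mul_self_nonneg (v j))
        (Finset.mem_univ i)
  nlinarith [abs_nonneg (v i), abs_mul_abs_self (v i)]

lemma integrable_bdd [IsProbabilityMeasure μ] {f : (Fin p → ℝ) → ℝ} (hf : Measurable f)
    {C : ℝ} (h : ∀ᵐ v ∂μ, |f v| ≤ C) : Integrable f μ :=
  (integrable_const C).mono' hf.aestronglyMeasurable (by simpa [Real.norm_eq_abs] using h)

lemma meas_mono2 (i j : Fin p) : Measurable fun v : Fin p → ℝ => v i * v j :=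
  (measurable_pi_apply i).mul (measurable_pi_apply j)

lemma meas_mono4 (i j k l : Fin p) : Measurable fun v : Fin p → ℝ => v i * v j * (v k * v l) :=
  ((meas_mono2 i j).mul (meas_mono2 k l))

lemma int_mono2 [IsProbabilityMeasure μ] (hsph : ∀ᵐ x ∂μ, dotProduct x x = 1)
    (i j : Fin p) : Integrable (fun v => v i * v j) μ := by
  refine integrable_bdd (meas_mono2 i j) (C := 1) ?_
  filter_upwards [ae_abs_le hsph] with v hv
  calc |v i * v j| = |v i| * |v j| := abs_mul _ _
    _ ≤ 1 * 1 := by have := hv i; have := hv j; gcongr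
    _ = 1 := by ring

lemma int_mono4 [IsProbabilityMeasure μ] (hsph : ∀ᵐ x ∂μ, dotProduct x x = 1)
    (i j k l : Fin p) : Integrable (fun v => v i * v j * (v k * v l)) μ := by
  refine integrable_bdd (meas_mono4 i j k l) (C := 1) ?_
  filter_upwards [ae_abs_le hsph] with v hv
  have hi := hv i; have hj := hv j; have hk := hv k; have hl := hv l
  calc |v i * v j * (v k * v l)| = |v i| * |v j| * (|v k| * |v l|) := by
        rw [abs_mul, abs_mul, abs_mul]
    _ ≤ 1 * 1 * (1 * 1) := by gcongr
    _ = 1 := by ring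

end SphereAux

namespace SphereAux2

variable {p : ℕ}

lemma sum3 {i j : Fin p} (hij : i ≠ j) (g : Fin p → ℝ)
    (h : ∀ k, k ≠ i → k ≠ j → g k = 0) : ∑ k, g k = g i + g j := by
  rw [← Finset.sum_subset (Finset.subset_univ ({i, j} : Finset (Fin p)))
      (fun k _ hk => h k (fun h1 => hk (by simp [h1])) (fun h1 => hk (by simp [h1])))]
  rw [Finset.sum_pair hij]

lemma flip_mem (i : Fin p) :
    (Matrix.diagonal (fun m => if m = i then (-1:ℝ) else 1)) ∈ Matrix.orthogonalGroup (Fin p) ℝ := by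
  rw [Matrix.mem_orthogonalGroup_iff]
  have h1 : star (Matrix.diagonal (fun m => if m = i then (-1:ℝ) else 1)) =
      Matrix.diagonal (fun m => if m = i then (-1:ℝ) else 1) := by
    simp [Matrix.star_eq_conjTranspose, Matrix.diagonal_conjTranspose]
  rw [Matrix.diagonal_transpose, Matrix.diagonal_mul_diagonal]
  have h2 : (fun m => (if m = i then (-1:ℝ) else 1) * (if m = i then (-1:ℝ) else 1))
      = fun _ => (1:ℝ) := by
    funext m; by_cases h : m = i <;> simp [h]
  rw [h2, Matrix.diagonal_one]

lemma flip_mulVec (i : Fin p) (v : Fin p → ℝ) :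
    (Matrix.diagonal (fun m => if m = i then (-1:ℝ) else 1)).mulVec v
      = fun m => (if m = i then (-1:ℝ) else 1) * v m :=
  funext fun m => Matrix.mulVec_diagonal _ _ _

def permM (σ : Equiv.Perm (Fin p)) : Matrix (Fin p) (Fin p) ℝ := fun m n => if n = σ m then 1 else 0

lemma permM_mem (σ : Equiv.Perm (Fin p)) : permM σ ∈ Matrix.orthogonalGroup (Fin p) ℝ := by
  rw [Matrix.mem_orthogonalGroup_iff]
  ext m n
  simp only [Matrix.mul_apply, Matrix.star_eq_conjTranspose, Matrix.conjTranspose_apply,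
    star_trivial, Matrix.transpose_apply, permM, Matrix.one_apply, ite_mul, one_mul, zero_mul]
  rw [Finset.sum_ite_eq' Finset.univ (σ m) (fun k => if k = σ n then (1:ℝ) else 0)]
  simp [EmbeddingLike.apply_eq_iff_eq, eq_comm]

lemma permM_mulVec (σ : Equiv.Perm (Fin p)) (v : Fin p → ℝ) :
    (permM σ).mulVec v = fun m => v (σ m) := by
  funext m
  simp [permM, Matrix.mulVec, dotProduct, ite_mul, one_mul, zero_mul]

noncomputable def rc : ℝ := (Real.sqrt 2)⁻¹

lemma rc_sq : rc * rc = 1/2 := by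
  rw [rc, ← mul_inv, Real.mul_self_sqrt (by norm_num)]
  norm_num

noncomputable def rotM (i j : Fin p) : Matrix (Fin p) (Fin p) ℝ := fun m n =>
  if m = i then (if n = i then rc else if n = j then rc else 0)
  else if m = j then (if n = i then rc else if n = j then -rc else 0)
  else (if n = m then 1 else 0)

lemma rotM_mem {i j : Fin p} (hij : i ≠ j) : rotM i j ∈ Matrix.orthogonalGroup (Fin p) ℝ := by
  have hji := hij.symm
  rw [Matrix.mem_orthogonalGroup_iff]
  ext m n
  simp only [Matrix.mul_apply, Matrix.star_eq_conjTranspose, Matrix.conjTranspose_apply,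
    star_trivial, Matrix.transpose_apply]
  by_cases hm : m = i
  · rw [sum3 hij (fun k => rotM i j m k * rotM i j n k)
      (fun k hk1 hk2 => by simp [rotM, hm, hk1, hk2])]
    by_cases hn : n = i
    · simp [rotM, hm, hn, hij, hji, Matrix.one_apply]
      linarith [rc_sq]
    · by_cases hn2 : n = j
      · simp [rotM, hm, hn2, hij, hji, Matrix.one_apply]
      · simp [rotM, hm, hn, hn2, hij, hji, Ne.symm hn, Ne.symm hn2, Matrix.one_apply,
          show ¬ (m = n) from fun h => hn (hm ▸ h ▸ rfl)]
  · by_cases hm2 : m = j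
    · rw [sum3 hij (fun k => rotM i j m k * rotM i j n k)
        (fun k hk1 hk2 => by simp [rotM, hm, hm2, hk1, hk2])]
      by_cases hn : n = i
      · simp [rotM, hm2, hn, hij, hji, Matrix.one_apply]
      · by_cases hn2 : n = j
        · simp [rotM, hm2, hn2, hij, hji, Matrix.one_apply]
          linarith [rc_sq]
        · simp [rotM, hm2, hn, hn2, hij, hji, Ne.symm hn, Ne.symm hn2, Matrix.one_apply,
            show ¬ (m = n) from fun h => hn2 (hm2 ▸ h ▸ rfl)]
    · have hs : ∑ k, rotM i j m k * rotM i j n k = rotM i j n m := by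
        have hrow : ∀ k, rotM i j m k * rotM i j n k = if k = m then rotM i j n k else 0 := by
          intro k; simp only [rotM, hm, hm2, if_false, ite_mul, one_mul, zero_mul]
        simp only [hrow]
        simpa using Finset.sum_ite_eq' Finset.univ m (fun k => rotM i j n k)
      rw [hs]
      by_cases hn : n = i
      · simp [rotM, hn, hm, hm2, Matrix.one_apply, show ¬ (m = n) from fun h => hm (h ▸ hn)]
      · by_cases hn2 : n = j
        · simp [rotM, hn, hn2, hm, hm2, Matrix.one_apply,
            show ¬ (m = n) from fun h => hm2 (h ▸ hn2)]
        · simp [rotM, hn, hn2, Matrix.one_apply, eq_comm]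

lemma rotM_mulVec {i j : Fin p} (hij : i ≠ j) (v : Fin p → ℝ) :
    (rotM i j).mulVec v = fun m =>
      if m = i then rc * v i + rc * v j
      else if m = j then rc * v i - rc * v j
      else v m := by
  funext m
  simp only [Matrix.mulVec, dotProduct]
  by_cases hm : m = i
  · rw [sum3 hij (fun n => rotM i j m n * v n)
      (fun k hk1 hk2 => by simp [rotM, hm, hk1, hk2])]
    simp [rotM, hm, hij.symm]
  · by_cases hm2 : m = j
    · rw [sum3 hij (fun n => rotM i j m n * v n)
        (fun k hk1 hk2 => by simp [rotM, hm, hm2, hk1, hk2])]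
      simp [rotM, hm, hm2, hij.symm, hij]
      ring
    · simp only [rotM, hm, hm2, if_false, ite_mul, one_mul, zero_mul]
      simpa using Finset.sum_ite_eq' Finset.univ m v

lemma quadSumId {p : ℕ} (S : Matrix (Fin p) (Fin p) ℝ) (hs : ∀ i j, S j i = S i j) :
    ∑ i, ∑ k, ∑ j, ∑ l, (S i j * S k l) *
      ((if i = j then (1:ℝ) else 0) * (if k = l then 1 else 0)
        + ((if i = k then (1:ℝ) else 0) * (if j = l then 1 else 0)
          + (if i = l then (1:ℝ) else 0) * (if j = k then 1 else 0)))
      = S.trace^2 + 2*(S*S).trace := by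
  simp only [mul_add, Finset.sum_add_distrib, mul_ite, ite_mul, mul_zero, zero_mul, mul_one,
    one_mul, Finset.sum_ite_eq, Finset.sum_ite_eq', Finset.mem_univ, if_true,
    Matrix.trace, Matrix.diag, Matrix.mul_apply, sq, Finset.mul_sum, Finset.sum_mul]
  have h2 : ∀ x : Fin p, ∑ x1 : Fin p, ∑ x2 : Fin p, (if x = x1 then S x x2 * S x1 x2 else 0)
      = ∑ x2, S x x2 * S x x2 := by
    intro x
    rw [Finset.sum_comm]
    simp [Finset.sum_ite_eq]
  have h3 : ∀ x : Fin p, ∑ x1 : Fin p, ∑ x2 : Fin p, ∑ x3 : Fin p,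
      (if x2 = x1 then if x = x3 then S x x2 * S x1 x3 else 0 else 0)
      = ∑ x1, S x x1 * S x1 x := by
    intro x
    refine Finset.sum_congr rfl fun x1 _ => ?_
    have : ∀ x2 : Fin p, ∑ x3 : Fin p, (if x2 = x1 then if x = x3 then S x x2 * S x1 x3 else 0 else 0)
        = if x2 = x1 then S x x2 * S x1 x else 0 := by
      intro x2
      by_cases h : x2 = x1 <;> simp [h, Finset.sum_ite_eq]
    rw [Finset.sum_congr rfl fun x2 _ => this x2]
    simp [Finset.sum_ite_eq']
  rw [Finset.sum_congr rfl fun x _ => h2 x, Finset.sum_congr rfl fun x _ => h3 x]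
  rw [show ∑ x : Fin p, ∑ i : Fin p, 2 * (S x i * S i x) = 2 * ∑ x : Fin p, ∑ i : Fin p, S x i * S i x by
    rw [Finset.mul_sum]; exact Finset.sum_congr rfl fun x _ => by rw [Finset.mul_sum]]
  have hsy : ∀ x : Fin p, ∑ x2, S x x2 * S x x2 = ∑ x2, S x x2 * S x2 x := by
    intro x; exact Finset.sum_congr rfl fun x2 _ => by rw [hs x x2]
  rw [Finset.sum_congr rfl fun x _ => hsy x]
  have htr : ∑ x : Fin p, ∑ i : Fin p, S i i * S x x = ∑ x : Fin p, ∑ x1 : Fin p, S x x * S x1 x1 :=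
    Finset.sum_congr rfl fun x _ => Finset.sum_congr rfl fun i _ => mul_comm _ _
  have hTT : ∑ x : Fin p, ∑ i : Fin p, S x i * S i x = ∑ x : Fin p, ∑ x1 : Fin p, S x x1 * S x1 x :=
    rfl
  rw [htr, hTT]
  ring

end SphereAux2

namespace SphereMoments
open SphereAux SphereAux2

variable {p : ℕ} {μ : Measure (Fin p → ℝ)} [IsProbabilityMeasure μ]
variable (hsph : ∀ᵐ x ∂μ, dotProduct x x = 1)
variable (hinv : ∀ Q : Matrix (Fin p) (Fin p) ℝ, Q ∈ Matrix.orthogonalGroup (Fin p) ℝ →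
      μ.map (fun x => Q.mulVec x) = μ)

include hinv in
lemma integral_flip_zero (i : Fin p) {f : (Fin p → ℝ) → ℝ} (hf : Measurable f)
    (hodd : ∀ v : Fin p → ℝ, f (fun m => (if m = i then (-1:ℝ) else 1) * v m) = - f v) :
    ∫ v, f v ∂μ = 0 := by
  have h := integral_comp_orth hinv (flip_mem i) hf
  simp only [flip_mulVec, hodd] at h
  rw [integral_neg] at h
  linarith

include hinv in
lemma integral_perm (σ : Equiv.Perm (Fin p)) {f : (Fin p → ℝ) → ℝ} (hf : Measurable f) :
    ∫ v, f (fun m => v (σ m)) ∂μ = ∫ v, f v ∂μ := by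
  have h := integral_comp_orth hinv (permM_mem σ) hf
  simp only [permM_mulVec] at h
  exact h

include hinv in
lemma m2_offdiag {i j : Fin p} (hij : i ≠ j) : ∫ v, v i * v j ∂μ = 0 := by
  refine integral_flip_zero hinv i (meas_mono2 i j) (fun v => ?_)
  simp [Ne.symm hij]

include hinv in
lemma diag4_eq (i j : Fin p) :
    ∫ v, v j * v j * (v j * v j) ∂μ = ∫ v, v i * v i * (v i * v i) ∂μ := by
  have h := integral_perm hinv (Equiv.swap i j) (meas_mono4 i i i i)
  simpa using h

include hsph hinv in
lemma m2_diag (hp : 0 < p) (i : Fin p) : ∫ v, v i * v i ∂μ = 1 / p := by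
  have hall : ∀ j, ∫ v, v j * v j ∂μ = ∫ v, v i * v i ∂μ := by
    intro j
    have h := integral_perm hinv (Equiv.swap i j) (meas_mono2 i i)
    simpa using h
  have hsum : ∑ j, ∫ v, v j * v j ∂μ = 1 := by
    rw [← integral_finset_sum Finset.univ (fun j _ => int_mono2 hsph j j)]
    have h1 : ∫ v, ∑ j, v j * v j ∂μ = ∫ _v, (1:ℝ) ∂μ :=
      integral_congr_ae (by filter_upwards [hsph] with v hv; simpa [dotProduct] using hv)
    rw [h1]; simp
  rw [Finset.sum_congr rfl (fun j _ => hall j), Finset.sum_const, Finset.card_univ,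
    Fintype.card_fin, nsmul_eq_mul] at hsum
  field_simp
  simp only [pow_two]
  linarith [hsum]

include hinv in
lemma pair_swap_eq {a b a' b' : Fin p} (hab : a ≠ b) (hab' : a' ≠ b') :
    ∫ v, v a * v a * (v b * v b) ∂μ = ∫ v, v a' * v a' * (v b' * v b') ∂μ := by
  obtain ⟨σ, ha, hb⟩ : ∃ σ : Equiv.Perm (Fin p), σ a' = a ∧ σ b' = b := by
    set τ := Equiv.swap a' a with hτdef
    have hτ : τ a' = a := Equiv.swap_apply_left _ _
    have hca : τ b' ≠ a := by
      rw [← hτ]; exact fun h => hab'.symm (τ.injective h)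
    refine ⟨τ.trans (Equiv.swap (τ b') b), ?_, ?_⟩
    · simp only [Equiv.trans_apply, hτ]
      exact Equiv.swap_apply_of_ne_of_ne (Ne.symm hca) hab
    · simp only [Equiv.trans_apply]
      exact Equiv.swap_apply_left _ _
  have h := integral_perm hinv σ (f := fun v => v a' * v a' * (v b' * v b')) (meas_mono4 a' a' b' b')
  simp only [ha, hb] at h
  exact h

include hsph hinv in
lemma pair4_int {i j : Fin p} (hij : i ≠ j) :
    ∫ v, v i * v i * (v j * v j) ∂μ = 1 / (p * (p+2)) ∧
    ∫ v, v i * v i * (v i * v i) ∂μ = 3 / (p * (p+2)) := by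
  have hp : 0 < p := i.pos
  set a := ∫ v, v i * v i * (v i * v i) ∂μ with ha
  set bb := ∫ v, v i * v i * (v j * v j) ∂μ with hbb
  -- rotation: a = 3 bb
  have hrot := integral_comp_orth hinv (rotM_mem hij) (meas_mono4 i i i i)
  simp only [rotM_mulVec hij, eq_self_iff_true, if_true] at hrot
  have e1 : (fun v : Fin p → ℝ =>
      (rc*v i + rc*v j)*(rc*v i + rc*v j)*((rc*v i + rc*v j)*(rc*v i + rc*v j)))
      = fun v => (1/4)*(v i*v i*(v i*v i)) + ((v i*v i*(v i*v j)) + ((3/2)*(v i*v i*(v j*v j))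
          + ((v i*v j*(v j*v j)) + (1/4)*(v j*v j*(v j*v j))))) := by
    funext v
    linear_combination ((rc*rc + 1/2) * (v i + v j)^4) * rc_sq
  rw [e1] at hrot
  have I1 := (int_mono4 hsph i i i i).const_mul (1/4)
  have I2 := int_mono4 hsph i i i j
  have I3 := (int_mono4 hsph i i j j).const_mul (3/2)
  have I4 := int_mono4 hsph i j j j
  have I5 := (int_mono4 hsph j j j j).const_mul (1/4)
  have I45 : Integrable (fun v : Fin p → ℝ => v i*v j*(v j*v j) + (1/4)*(v j*v j*(v j*v j))) μ :=
    I4.add I5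
  have I345 : Integrable (fun v : Fin p → ℝ => (3/2)*(v i*v i*(v j*v j))
      + (v i*v j*(v j*v j) + (1/4)*(v j*v j*(v j*v j)))) μ := I3.add I45
  have I2345 : Integrable (fun v : Fin p → ℝ => v i*v i*(v i*v j) + ((3/2)*(v i*v i*(v j*v j))
      + (v i*v j*(v j*v j) + (1/4)*(v j*v j*(v j*v j))))) μ := I2.add I345
  rw [integral_add I1 I2345, integral_add I2 I345, integral_add I3 I45, integral_add I4 I5,
    integral_const_mul, integral_const_mul, integral_const_mul] at hrot
  have z1 : ∫ v, v i * v i * (v i * v j) ∂μ = 0 := by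
    refine integral_flip_zero hinv j (meas_mono4 i i i j) (fun v => ?_)
    simp [hij]
  have z2 : ∫ v, v i * v j * (v j * v j) ∂μ = 0 := by
    refine integral_flip_zero hinv i (meas_mono4 i j j j) (fun v => ?_)
    simp [Ne.symm hij]
  rw [z1, z2, diag4_eq hinv i j] at hrot
  have hrel : a = 3 * bb := by rw [ha, hbb]; linarith [hrot]
  -- summation: p * (p*bb + (a - bb)) = 1
  have h1 : ∫ v, (∑ j', v j' * v j') * (∑ k', v k' * v k') ∂μ = 1 := by
    have he : ∀ᵐ v ∂μ, (∑ j', v j' * v j') * (∑ k', v k' * v k') = (1:ℝ) := by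
      filter_upwards [hsph] with v hv
      have hs : ∑ j', v j' * v j' = 1 := by simpa [dotProduct] using hv
      rw [hs]; ring
    rw [integral_congr_ae he]; simp
  have h2 : (fun v : Fin p → ℝ => (∑ j', v j' * v j') * (∑ k', v k' * v k'))
      = fun v => ∑ j', ∑ k', v j' * v j' * (v k' * v k') := by
    funext v; rw [Finset.sum_mul_sum]
  rw [h2] at h1
  rw [integral_finset_sum Finset.univ
    (fun j' _ => integrable_finset_sum Finset.univ (fun k' _ => int_mono4 hsph j' j' k' k'))] at h1
  have h3 : ∀ j' : Fin p, ∫ v, ∑ k', v j' * v j' * (v k' * v k') ∂μ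
      = ∑ k', ∫ v, v j' * v j' * (v k' * v k') ∂μ :=
    fun j' => integral_finset_sum Finset.univ (fun k' _ => int_mono4 hsph j' j' k' k')
  rw [Finset.sum_congr rfl (fun j' _ => h3 j')] at h1
  have h4 : ∀ j' k' : Fin p, ∫ v, v j' * v j' * (v k' * v k') ∂μ
      = if k' = j' then a else bb := by
    intro j' k'
    by_cases h : k' = j'
    · rw [if_pos h, h, diag4_eq hinv i j']
    · rw [if_neg h, pair_swap_eq hinv (Ne.symm h) hij]
  have h5 : ∀ j' : Fin p, ∑ k', (if k' = j' then a else bb) = (p:ℝ) * bb + (a - bb) := by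
    intro j'
    have : ∀ k' : Fin p, (if k' = j' then a else bb) = bb + (if k' = j' then a - bb else 0) := by
      intro k'; by_cases h : k' = j' <;> simp [h]
    rw [Finset.sum_congr rfl (fun k' _ => this k'), Finset.sum_add_distrib,
      Finset.sum_const, Finset.card_univ, Fintype.card_fin, nsmul_eq_mul,
      Finset.sum_ite_eq' Finset.univ j' (fun _ => a - bb)]
    simp
  rw [Finset.sum_congr rfl (fun j' _ => by rw [Finset.sum_congr rfl (fun k' _ => h4 j' k'), h5 j']),
    Finset.sum_const, Finset.card_univ, Fintype.card_fin, nsmul_eq_mul] at h1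
  have hpr : (p:ℝ) > 0 := by exact_mod_cast hp
  constructor
  · rw [hbb]
    have : (p:ℝ) * ((p:ℝ) * bb + (a - bb)) = (p:ℝ) * ((p:ℝ)+2) * bb := by rw [hrel]; ring
    rw [this] at h1
    field_simp at h1 ⊢
    simp only [pow_two]
    rw [← hbb]
    linarith [h1]
  · rw [hrel]
    have : (p:ℝ) * ((p:ℝ) * bb + (a - bb)) = (p:ℝ) * ((p:ℝ)+2) * bb := by rw [hrel]; ring
    rw [this] at h1
    field_simp at h1 ⊢
    linarith [h1]

include hsph hinv in
lemma diag4 (i : Fin p) : ∫ v, v i * v i * (v i * v i) ∂μ = 3 / (p * (p+2)) := by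
  by_cases hex : ∃ j, j ≠ i
  · obtain ⟨j, hj⟩ := hex
    exact (pair4_int hsph hinv (Ne.symm hj)).2
  · push_neg at hex
    have hp1 : p = 1 := by
      have h := Fintype.card_eq_one_iff.mpr ⟨i, hex⟩
      simpa using h
    subst hp1
    have hone : ∀ᵐ v ∂μ, v i * v i * (v i * v i) = (1:ℝ) := by
      filter_upwards [hsph] with v hv
      have hs : ∑ j, v j * v j = 1 := by simpa [dotProduct] using hv
      have hi0 : i = 0 := Subsingleton.elim i 0
      rw [Fin.sum_univ_one] at hs
      rw [hi0]
      nlinarith [hs]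
    rw [integral_congr_ae hone]
    simp
    norm_num

include hsph hinv in
lemma moment2 (hp : 0 < p) (i j : Fin p) :
    ∫ v, v i * v j ∂μ = (if i = j then (1:ℝ) else 0) / p := by
  by_cases h : i = j
  · rw [← h, m2_diag hsph hinv hp i, if_pos rfl]
  · rw [m2_offdiag hinv h, if_neg h, zero_div]

include hsph hinv in
lemma moment4 (i j k l : Fin p) :
    ∫ v, v i * v j * (v k * v l) ∂μ =
      ((if i = j then (1:ℝ) else 0) * (if k = l then 1 else 0)
        + ((if i = k then (1:ℝ) else 0) * (if j = l then 1 else 0)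
          + (if i = l then (1:ℝ) else 0) * (if j = k then 1 else 0))) / ((p:ℝ) * (p+2)) := by
  by_cases hij : i = j
  · by_cases hkl : k = l
    · by_cases hik : i = k
      · rw [← hij, ← hkl, ← hik, diag4 hsph hinv i]
        simp
        norm_num
      · rw [← hij, ← hkl, (pair4_int hsph hinv hik).1]
        simp [hik]
    · rw [← hij]
      by_cases hki : k = i
      · have hl : ¬ i = l := fun h => hkl (hki.trans h)
        rw [hki]
        refine Eq.trans (integral_flip_zero hinv l (meas_mono4 i i i l) fun v => ?_) ?_
        · simp only [if_neg hl, if_pos rfl, eq_self_iff_true, if_true, one_mul, neg_one_mul]; ring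
        · simp [hl]
      · have h1 : ¬ i = k := fun h => hki h.symm
        have h2 : ¬ l = k := fun h => hkl h.symm
        refine Eq.trans (integral_flip_zero hinv k (meas_mono4 i i k l) fun v => ?_) ?_
        · simp only [if_neg h1, if_pos rfl, eq_self_iff_true, if_true, if_neg h2, one_mul, neg_one_mul]; ring
        · simp [hkl, h1]
  · by_cases hkl : k = l
    · rw [← hkl]
      have hji : ¬ j = i := fun h => hij h.symm
      by_cases hik : i = k
      · rw [← hik]
        refine Eq.trans (integral_flip_zero hinv j (meas_mono4 i j i i) fun v => ?_) ?_
        · simp only [if_neg hij, if_pos rfl, eq_self_iff_true, if_true, one_mul, neg_one_mul]; ring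
        · simp [hij, hji]
      · have hki : ¬ k = i := fun h => hik h.symm
        refine Eq.trans (integral_flip_zero hinv i (meas_mono4 i j k k) fun v => ?_) ?_
        · simp only [if_neg hji, if_pos rfl, eq_self_iff_true, if_true, if_neg hki, one_mul, neg_one_mul]; ring
        · simp [hij, hik]
    · by_cases hik : i = k
      · by_cases hjl : j = l
        · rw [← hik, ← hjl]
          rw [show (fun v : Fin p → ℝ => v i * v j * (v i * v j))
              = fun v => v i * v i * (v j * v j) from funext fun v => by ring]
          rw [(pair4_int hsph hinv hij).1]
          simp [hij, fun h => hij (h : i = j)]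
        · rw [← hik]
          have hl1 : ¬ i = l := fun h => hkl (hik.symm.trans h)
          have hl2 : ¬ j = l := hjl
          refine Eq.trans (integral_flip_zero hinv l (meas_mono4 i j i l) fun v => ?_) ?_
          · simp only [if_neg hl1, if_neg hl2, if_pos rfl, eq_self_iff_true, if_true, one_mul, neg_one_mul]; ring
          · simp [hij, hjl, hl1]
      · by_cases hil : i = l
        · by_cases hjk : j = k
          · rw [← hil, ← hjk]
            rw [show (fun v : Fin p → ℝ => v i * v j * (v j * v i))
                = fun v => v i * v i * (v j * v j) from funext fun v => by ring]
            rw [(pair4_int hsph hinv hij).1]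
            simp [hij, fun h => hij (h : i = j), fun h => hij ((h : j = i).symm)]
          · rw [← hil]
            have hkj : ¬ k = j := fun h => hjk h.symm
            refine Eq.trans (integral_flip_zero hinv j (meas_mono4 i j k i) fun v => ?_) ?_
            · simp only [if_neg hij, if_pos rfl, eq_self_iff_true, if_true, if_neg hkj, one_mul, neg_one_mul]; ring
            · simp [hij, hjk, hik]
        · have hji : ¬ j = i := fun h => hij h.symm
          have hki : ¬ k = i := fun h => hik h.symm
          have hli : ¬ l = i := fun h => hil h.symm
          refine Eq.trans (integral_flip_zero hinv i (meas_mono4 i j k l) fun v => ?_) ?_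
          · simp only [if_neg hji, if_neg hki, if_neg hli, if_pos rfl, eq_self_iff_true, if_true, one_mul, neg_one_mul]; ring
          · simp [hij, hik, hil]
include hsph hinv in
lemma quad1 (hp : 0 < p) (S : Matrix (Fin p) (Fin p) ℝ) :
    ∫ v, dotProduct v (S.mulVec v) ∂μ = S.trace / p := by
  have e : (fun v : Fin p → ℝ => dotProduct v (S.mulVec v))
      = fun v => ∑ i, ∑ j, S i j * (v i * v j) := by
    funext v
    simp only [dotProduct, Matrix.mulVec, Finset.mul_sum]
    exact Finset.sum_congr rfl fun i _ => Finset.sum_congr rfl fun j _ => by ring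
  rw [e, integral_finset_sum Finset.univ
    (fun i _ => integrable_finset_sum Finset.univ
      (fun j _ => (int_mono2 hsph i j).const_mul (S i j)))]
  have h1 : ∀ i : Fin p, ∫ v, ∑ j, S i j * (v i * v j) ∂μ
      = ∑ j, S i j * ((if i = j then (1:ℝ) else 0) / p) := by
    intro i
    rw [integral_finset_sum Finset.univ (fun j _ => (int_mono2 hsph i j).const_mul (S i j))]
    exact Finset.sum_congr rfl fun j _ => by
      rw [integral_const_mul, moment2 hsph hinv hp i j]
  rw [Finset.sum_congr rfl fun i _ => h1 i]
  have h2 : ∀ i : Fin p, ∑ j, S i j * ((if i = j then (1:ℝ) else 0) / p) = S i i / p := by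
    intro i
    have h3 : ∀ j : Fin p, S i j * ((if i = j then (1:ℝ) else 0) / p)
        = if j = i then S i i / p else 0 := by
      intro j
      by_cases h : j = i
      · rw [h]; simp [div_eq_mul_inv]
      · simp [h, show ¬ i = j from fun hh => h hh.symm]
    rw [Finset.sum_congr rfl fun j _ => h3 j]
    simpa using Finset.sum_ite_eq' Finset.univ i (fun _ => S i i / p)
  rw [Finset.sum_congr rfl fun i _ => h2 i]
  rw [Matrix.trace, ← Finset.sum_div]
  rfl

include hsph hinv in
lemma quad2 (S : Matrix (Fin p) (Fin p) ℝ) (hs : ∀ i j, S j i = S i j) :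
    ∫ v, (dotProduct v (S.mulVec v))^2 ∂μ
      = (S.trace^2 + 2 * (S * S).trace) / ((p:ℝ) * (p+2)) := by
  have e : (fun v : Fin p → ℝ => (dotProduct v (S.mulVec v))^2)
      = fun v => ∑ i, ∑ k, ∑ j, ∑ l, (S i j * S k l) * (v i * v j * (v k * v l)) := by
    funext v
    have h1 : dotProduct v (S.mulVec v) = ∑ i, ∑ j, S i j * (v i * v j) := by
      simp only [dotProduct, Matrix.mulVec, Finset.mul_sum]
      exact Finset.sum_congr rfl fun i _ => Finset.sum_congr rfl fun j _ => by ring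
    rw [h1, sq, Finset.sum_mul_sum]
    refine Finset.sum_congr rfl fun i _ => ?_
    refine Finset.sum_congr rfl fun k _ => ?_
    rw [Finset.sum_mul_sum]
    exact Finset.sum_congr rfl fun j _ => Finset.sum_congr rfl fun l _ => by ring
  have int1 : ∀ (i k j l : Fin p),
      Integrable (fun v : Fin p → ℝ => (S i j * S k l) * (v i * v j * (v k * v l))) μ :=
    fun i k j l => (int_mono4 hsph i j k l).const_mul _
  rw [e, integral_finset_sum Finset.univ (fun i _ => integrable_finset_sum Finset.univ
    (fun k _ => integrable_finset_sum Finset.univ (fun j _ => integrable_finset_sum Finset.univ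
      (fun l _ => int1 i k j l))))]
  have h2 : ∀ i : Fin p, ∫ v, ∑ k, ∑ j, ∑ l, (S i j * S k l) * (v i * v j * (v k * v l)) ∂μ
      = ∑ k, ∑ j, ∑ l, (S i j * S k l) *
        (((if i = j then (1:ℝ) else 0) * (if k = l then 1 else 0)
          + ((if i = k then (1:ℝ) else 0) * (if j = l then 1 else 0)
            + (if i = l then (1:ℝ) else 0) * (if j = k then 1 else 0))) / ((p:ℝ) * (p+2))) := by
    intro i
    rw [integral_finset_sum Finset.univ (fun k _ => integrable_finset_sum Finset.univ
      (fun j _ => integrable_finset_sum Finset.univ (fun l _ => int1 i k j l)))]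
    refine Finset.sum_congr rfl fun k _ => ?_
    rw [integral_finset_sum Finset.univ (fun j _ => integrable_finset_sum Finset.univ
      (fun l _ => int1 i k j l))]
    refine Finset.sum_congr rfl fun j _ => ?_
    rw [integral_finset_sum Finset.univ (fun l _ => int1 i k j l)]
    refine Finset.sum_congr rfl fun l _ => ?_
    rw [integral_const_mul, moment4 hsph hinv i j k l]
  rw [Finset.sum_congr rfl fun i _ => h2 i]
  simp only [← mul_div_assoc, ← Finset.sum_div]
  congr 1
  exact quadSumId S hs

end SphereMoments

open SphereAux SphereAux2 SphereMoments SqrtAux in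
/-- For x = ξ Σ^{1/2} u in an elliptical model,
Var(‖x‖²) = [E(ξ⁴)/(p(p+2)) − 1]·tr(Σ)² + 2[E(ξ⁴)/(p(p+2))]·tr(Σ²). -/
theorem variance_norm_sq_elliptical {Ω : Type*} [MeasurableSpace Ω]
    (P : Measure Ω) [IsProbabilityMeasure P] (p : ℕ) (hp : 0 < p)
    (ξ : Ω → ℝ) (u : Ω → Fin p → ℝ)
    (hξm : Measurable ξ) (hum : Measurable u)
    (hξ0 : ∀ ω, 0 ≤ ξ ω)
    (hξ2 : ∫ ω, (ξ ω) ^ 2 ∂P = (p : ℝ))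
    (hξ4 : Integrable (fun ω => (ξ ω) ^ 4) P)
    (hu : IsUniformOnSphere (P.map u))
    (hindep : IndepFun ξ u P)
    (S : Matrix (Fin p) (Fin p) ℝ) (hS : S.PosSemidef)
    (x : Ω → Fin p → ℝ) (hx : ∀ ω, x ω = ξ ω • (hS.sqrt.mulVec (u ω))) :
    variance (fun ω => dotProduct (x ω) (x ω)) P =
      ((∫ ω, (ξ ω) ^ 4 ∂P) / ((p : ℝ) * ((p : ℝ) + 2)) - 1) * S.trace ^ 2 +
        2 * ((∫ ω, (ξ ω) ^ 4 ∂P) / ((p : ℝ) * ((p : ℝ) + 2))) * (S * S).trace := by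
  obtain ⟨hprob, hsph, hinv⟩ := hu
  haveI : IsProbabilityMeasure (P.map u) := hprob
  have hppos : (0:ℝ) < (p:ℝ) := by exact_mod_cast hp
  have hAsymm : (hS.sqrt)ᵀ = hS.sqrt := by
    have h := sqrt_conjTranspose hS
    rwa [Matrix.conjTranspose_eq_transpose_of_trivial] at h
  have hSsymm : ∀ a b, S b a = S a b := fun a b => by
    have h := hS.1.apply a b
    simpa using h
  set f : (Fin p → ℝ) → ℝ := fun v => dotProduct v (S.mulVec v) with hfdef
  have hfmeas : Measurable f := by
    rw [hfdef]
    simp only [dotProduct, Matrix.mulVec]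
    exact Finset.measurable_sum Finset.univ fun i _ =>
      (measurable_pi_apply i).mul (Finset.measurable_sum Finset.univ fun j _ =>
        (by fun_prop))
  have hfx : ∀ ω, dotProduct (x ω) (x ω) = (ξ ω)^2 * f (u ω) := by
    intro ω
    rw [hx ω]
    have key : ∀ A : Matrix (Fin p) (Fin p) ℝ, Aᵀ = A → A * A = S → ∀ v : Fin p → ℝ,
        dotProduct v (S.mulVec v) = dotProduct (A.mulVec v) (A.mulVec v) := by
      intro A hA hAA v
      rw [← hAA, ← Matrix.mulVec_mulVec, dotProduct_mulVec, ← Matrix.mulVec_transpose, hA]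
    have h1 : f (u ω) = dotProduct (hS.sqrt.mulVec (u ω)) (hS.sqrt.mulVec (u ω)) := by
      rw [hfdef]
      exact key hS.sqrt hAsymm (sqrt_mul_self hS) (u ω)
    rw [h1, smul_dotProduct, dotProduct_smul, smul_eq_mul, smul_eq_mul]
    ring
  rw [show (fun ω => dotProduct (x ω) (x ω)) = fun ω => (ξ ω)^2 * f (u ω) from
    funext hfx]
  have hq1 : ∫ v, f v ∂(P.map u) = S.trace / p := quad1 hsph hinv hp S
  have hq2 : ∫ v, (f v)^2 ∂(P.map u)
      = (S.trace^2 + 2*(S*S).trace) / ((p:ℝ) * ((p:ℝ)+2)) := quad2 hsph hinv S hSsymm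
  have hmap1 : ∫ ω, f (u ω) ∂P = S.trace / p := by
    rw [← integral_map hum.aemeasurable hfmeas.aestronglyMeasurable]
    exact hq1
  have hmap2 : ∫ ω, (f (u ω))^2 ∂P = (S.trace^2 + 2*(S*S).trace) / ((p:ℝ) * ((p:ℝ)+2)) := by
    rw [← integral_map hum.aemeasurable (hfmeas.pow_const 2).aestronglyMeasurable]
    exact hq2
  set C := ∑ i, ∑ j, |S i j| with hCdef
  have hfb : ∀ᵐ v ∂(P.map u), |f v| ≤ C := by
    filter_upwards [ae_abs_le hsph] with v hv
    have he : f v = ∑ i, ∑ j, S i j * (v i * v j) := by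
      rw [hfdef]
      dsimp only
      simp only [dotProduct, Matrix.mulVec, Finset.mul_sum]
      exact Finset.sum_congr rfl fun i _ => Finset.sum_congr rfl fun j _ => by ring
    rw [he, hCdef]
    calc |∑ i, ∑ j, S i j * (v i * v j)| ≤ ∑ i, |∑ j, S i j * (v i * v j)| :=
          Finset.abs_sum_le_sum_abs _ _
      _ ≤ ∑ i, ∑ j, |S i j * (v i * v j)| :=
          Finset.sum_le_sum fun i _ => Finset.abs_sum_le_sum_abs _ _
      _ ≤ ∑ i, ∑ j, |S i j| := by
          refine Finset.sum_le_sum fun i _ => Finset.sum_le_sum fun j _ => ?_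
          rw [abs_mul, abs_mul]
          have h1 := hv i; have h2 := hv j
          have h3 : |v i| * |v j| ≤ 1 := mul_le_one₀ h1 (abs_nonneg _) h2
          exact mul_le_of_le_one_right (abs_nonneg _) h3
  have hfbP : ∀ᵐ ω ∂P, |f (u ω)| ≤ C := by
    have hms : MeasurableSet {v : Fin p → ℝ | |f v| ≤ C} :=
      measurableSet_le hfmeas.abs measurable_const
    exact (MeasureTheory.ae_map_iff hum.aemeasurable hms).mp hfb
  have hfuint : Integrable (fun ω => f (u ω)) P :=
    (integrable_const C).mono' (hfmeas.comp hum).aestronglyMeasurable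
      (by filter_upwards [hfbP] with ω h; simpa [Real.norm_eq_abs] using h)
  have hfu2int : Integrable (fun ω => (f (u ω))^2) P := by
    refine (integrable_const (C^2)).mono'
      ((hfmeas.comp hum).pow_const 2).aestronglyMeasurable ?_
    filter_upwards [hfbP] with ω h
    rw [Real.norm_eq_abs, abs_pow]
    exact pow_le_pow_left₀ (abs_nonneg _) h 2
  have hξ2int : Integrable (fun ω => (ξ ω)^2) P := by
    refine ((integrable_const (1:ℝ)).add hξ4).mono' (hξm.pow_const 2).aestronglyMeasurable ?_
    filter_upwards with ω
    rw [Real.norm_eq_abs, abs_of_nonneg (by positivity)]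
    simp only [Pi.add_apply]
    nlinarith [sq_nonneg ((ξ ω)^2 - 1)]
  have hi1 : IndepFun (fun ω => (ξ ω)^2) (fun ω => f (u ω)) P :=
    hindep.comp (measurable_id.pow_const 2) hfmeas
  have hi2 : IndepFun (fun ω => (ξ ω)^4) (fun ω => (f (u ω))^2) P :=
    hindep.comp (measurable_id.pow_const 4) (hfmeas.pow_const 2)
  have hEX : ∫ ω, (ξ ω)^2 * f (u ω) ∂P = S.trace := by
    have h : ∫ ω, (ξ ω)^2 * f (u ω) ∂P
        = (∫ ω, (ξ ω)^2 ∂P) * ∫ ω, f (u ω) ∂P :=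
      hi1.integral_fun_mul_eq_mul_integral hξ2int.aestronglyMeasurable hfuint.aestronglyMeasurable
    rw [h, hξ2, hmap1]
    field_simp
  have hEX2 : ∫ ω, ((ξ ω)^2 * f (u ω))^2 ∂P
      = (∫ ω, (ξ ω)^4 ∂P) * ((S.trace^2 + 2*(S*S).trace) / ((p:ℝ) * ((p:ℝ)+2))) := by
    have h : ∫ ω, (ξ ω)^4 * (f (u ω))^2 ∂P
        = (∫ ω, (ξ ω)^4 ∂P) * ∫ ω, (f (u ω))^2 ∂P :=
      hi2.integral_fun_mul_eq_mul_integral hξ4.aestronglyMeasurable hfu2int.aestronglyMeasurable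
    rw [show (fun ω => ((ξ ω)^2 * f (u ω))^2) = fun ω => (ξ ω)^4 * (f (u ω))^2 from
      funext fun ω => by ring]
    rw [h, hmap2]
  have hXm : Measurable fun ω => (ξ ω)^2 * f (u ω) := (hξm.pow_const 2).mul (hfmeas.comp hum)
  have hXsq : Integrable (fun ω => ((ξ ω)^2 * f (u ω))^2) P := by
    rw [show (fun ω => ((ξ ω)^2 * f (u ω))^2) = fun ω => (ξ ω)^4 * (f (u ω))^2 from
      funext fun ω => by ring]
    exact hi2.integrable_mul hξ4 hfu2int
  have hmem : MemLp (fun ω => (ξ ω)^2 * f (u ω)) 2 P :=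
    (memLp_two_iff_integrable_sq hXm.aestronglyMeasurable).mpr hXsq
  rw [variance_eq_sub hmem]
  simp only [Pi.pow_apply]
  rw [hEX2, hEX]
  field_simp
  ring
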